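/- Let M be a real symmetric n×n matrix, λ ∈ ℝ, and let F_n = {Y ∈ ℝ^{n×n} : Y symmetric positive semidefinite, 0 ≤ Y_{ij} ≤ 1 for all i,j}. Suppose Ŷ ∈ F_n and U, L ∈ ℝ^{n×n} have all entries nonnegative and satisfy: L_{ij} Ŷ_{ij} = 0 and U_{ij}(Ŷ_{ij} − 1) = 0 for all i, j; M − λI − U + L is negative semidefinite; and (M − λI − U + L)·Ŷ = 0. Then for any Y' ∈ F_n with ⟨M − λI, Y' − Ŷ⟩ = 0, it holds that ⟨L, Y'⟩ = 0. -/

import Mathlib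

open Matrix

/-- Feasible set of the recovery SDP: symmetric PSD matrices with entries in `[0,1]`. -/
def FeasSDP {d : ℕ} (Y : Matrix (Fin d) (Fin d) ℝ) : Prop :=
  Y.PosSemidef ∧ ∀ i j, 0 ≤ Y i j ∧ Y i j ≤ 1

/-- Trace inner product `⟨X, Y⟩ = Σ_{i,j} X_{ij} Y_{ij}`. -/
noncomputable def mip {d : ℕ} (X Y : Matrix (Fin d) (Fin d) ℝ) : ℝ :=
  ∑ i, ∑ j, X i j * Y i j

lemma mip_eq_trace {d : ℕ} (X Y : Matrix (Fin d) (Fin d) ℝ) :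
    mip X Y = (X * Yᵀ).trace := by
  simp [mip, Matrix.trace, Matrix.mul_apply, Matrix.diag]

lemma psd_trace_nonneg {d : ℕ} {A : Matrix (Fin d) (Fin d) ℝ} (hA : A.PosSemidef) :
    0 ≤ A.trace := by
  rw [Matrix.trace]
  apply Finset.sum_nonneg
  intro i _
  exact hA.diag_nonneg

lemma trace_mul_nonneg {d : ℕ} {A B : Matrix (Fin d) (Fin d) ℝ}
    (hA : A.PosSemidef) (hB : B.PosSemidef) : 0 ≤ (A * B).trace := by
  open scoped MatrixOrder in obtain ⟨C, rfl⟩ := CStarAlgebra.nonneg_iff_eq_star_mul_self.mp hA.nonneg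
  rw [Matrix.mul_assoc, Matrix.trace_mul_comm]
  exact psd_trace_nonneg (hB.mul_mul_conjTranspose_same C)

/-- Uniqueness lemma: if `Ŷ ∈ F_n` satisfies the KKT conditions with dual variables
`U, L ≥ 0`, then any `Y' ∈ F_n` with `⟨M − λI, Y' − Ŷ⟩ = 0` satisfies `⟨L, Y'⟩ = 0`. -/
theorem dual_complementarity_for_uniqueness
    {n : ℕ} (M : Matrix (Fin n) (Fin n) ℝ) (hM : M.IsHermitian) (lam : ℝ)
    (Yhat : Matrix (Fin n) (Fin n) ℝ) (hYhat : FeasSDP Yhat)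
    (U L : Matrix (Fin n) (Fin n) ℝ)
    (hU : ∀ i j, 0 ≤ U i j) (hL : ∀ i j, 0 ≤ L i j)
    (hLY : ∀ i j, L i j * Yhat i j = 0)
    (hUY : ∀ i j, U i j * (Yhat i j - 1) = 0)
    (hnsd : (-(M - lam • (1 : Matrix (Fin n) (Fin n) ℝ) - U + L)).PosSemidef)
    (hcs : (M - lam • (1 : Matrix (Fin n) (Fin n) ℝ) - U + L) * Yhat = 0)
    (Y' : Matrix (Fin n) (Fin n) ℝ) (hY' : FeasSDP Y')
    (horth : mip (M - lam • (1 : Matrix (Fin n) (Fin n) ℝ)) (Y' - Yhat) = 0) :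
    mip L Y' = 0 := by
  set S := M - lam • (1 : Matrix (Fin n) (Fin n) ℝ) - U + L with hS
  -- transpose symmetry facts
  have hYhatT : Yhatᵀ = Yhat := hYhat.1.1
  have hY'T : Y'ᵀ = Y' := hY'.1.1
  -- ⟨S, Ŷ⟩ = 0
  have hSYhat : mip S Yhat = 0 := by
    rw [mip_eq_trace, hYhatT, hcs, Matrix.trace_zero]
  -- ⟨S, Y'⟩ ≤ 0
  have hSY' : mip S Y' ≤ 0 := by
    have h := trace_mul_nonneg hnsd hY'.1
    rw [Matrix.neg_mul, Matrix.trace_neg] at h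
    rw [mip_eq_trace, hY'T]
    linarith
  -- linearity of mip in the first argument
  have expand : ∀ Z : Matrix (Fin n) (Fin n) ℝ,
      mip S Z = mip (M - lam • (1 : Matrix (Fin n) (Fin n) ℝ)) Z - mip U Z + mip L Z := by
    intro Z
    simp only [mip, hS, Matrix.sub_apply, Matrix.add_apply,
      ← Finset.sum_sub_distrib, ← Finset.sum_add_distrib]
    congr 1; ext i; congr 1; ext j; ring
  -- mip in second argument over a difference
  have sub2 : ∀ X : Matrix (Fin n) (Fin n) ℝ,
      mip X (Y' - Yhat) = mip X Y' - mip X Yhat := by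
    intro X
    simp only [mip, Matrix.sub_apply, ← Finset.sum_sub_distrib]
    congr 1; ext i; congr 1; ext j; ring
  -- ⟨L, Ŷ⟩ = 0
  have hLYhat : mip L Yhat = 0 := by
    simp [mip, hLY]
  -- ⟨U, Y'⟩ ≤ ⟨U, Ŷ⟩
  have hUle : mip U Y' ≤ mip U Yhat := by
    apply Finset.sum_le_sum; intro i _
    apply Finset.sum_le_sum; intro j _
    have h1 : U i j * Yhat i j = U i j := by have := hUY i j; nlinarith [hUY i j]
    rw [h1]
    nlinarith [hU i j, (hY'.2 i j).2]
  -- ⟨L, Y'⟩ ≥ 0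
  have hLY'nonneg : 0 ≤ mip L Y' := by
    apply Finset.sum_nonneg; intro i _
    apply Finset.sum_nonneg; intro j _
    exact mul_nonneg (hL i j) (hY'.2 i j).1
  have key := expand (Y' - Yhat)
  rw [horth, sub2 U, sub2 L, sub2 S, hSYhat, hLYhat] at key
  linarith
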